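/- Suppose the cost process has a cash account: S_t(x,ω) = x⁰ + S̃_t(x̃,ω) and D_t(ω) = ℝ × D̃_t(ω), where x = (x⁰, x̃) ∈ ℝ × ℝ^{J̃}, S̃ is a convex cost process and D̃ a convex portfolio constraint process on the remaining assets J̃. Then the set C of claim processes superhedgeable with zero cost satisfies C = { c ∈ M | there exists an ℝ^{J̃}-valued adapted process x̃=(x̃_t)_{t=0}^T with x̃_T = 0 (convention x̃_{−1}=0) such that almost surely x̃_t ∈ D̃_t for all t and ∑_{t=0}^T S̃_t(x̃_t − x̃_{t−1}) + ∑_{t=0}^T c_t ≤ 0 }. -/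

import Mathlib

open MeasureTheory Filter

noncomputable section

/-- The portfolio held before time `t`, with the convention `x₋₁ = 0`. -/
def prevP {Ω : Type*} {T : ℕ} {E : Type*} [Zero E]
    (x : Fin (T + 1) → Ω → E) (t : Fin (T + 1)) : Ω → E :=
  if t.1 = 0 then 0 else x ⟨t.1 - 1, lt_of_le_of_lt (Nat.sub_le _ _) t.isLt⟩

/-- The recession cone of a set in a real vector space. -/
def rcone {V : Type*} [AddCommMonoid V] [SMul ℝ V] (A : Set V) : Set V :=
  {y | ∀ a ∈ A, ∀ α : ℝ, 0 < α → a + α • y ∈ A}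

variable {Ω : Type*} {m0 : MeasurableSpace Ω} {T : ℕ} {J : Type*} [Fintype J]

/-- A convex cost process: `S t · ω` is convex, lsc, vanishes at `0`, never `-∞`, and
`S t` is `B(ℝ^J) ⊗ ℱ t`-measurable. -/
structure CostProcess (ℱ : Filtration (Fin (T + 1)) m0) (J : Type*) [Fintype J] where
  S : Fin (T + 1) → (J → ℝ) → Ω → EReal
  ne_bot : ∀ t x ω, S t x ω ≠ ⊥
  convex : ∀ t ω (x y : J → ℝ) (a b : ℝ), 0 ≤ a → 0 ≤ b → a + b = 1 →
    S t (a • x + b • y) ω ≤ (a : EReal) * S t x ω + (b : EReal) * S t y ω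
  lsc : ∀ t ω, LowerSemicontinuous fun x => S t x ω
  zero : ∀ t ω, S t 0 ω = 0
  meas : ∀ t, Measurable[(inferInstance : MeasurableSpace (J → ℝ)).prod (ℱ t)]
    fun p : (J → ℝ) × Ω => S t p.1 p.2

/-- A convex portfolio constraint process: each `D t ω` is closed, convex, contains `0`,
and `ω ↦ D t ω` is `ℱ t`-measurable. -/
structure ConstraintProcess (ℱ : Filtration (Fin (T + 1)) m0) (J : Type*) [Fintype J] where
  D : Fin (T + 1) → Ω → Set (J → ℝ)
  closed : ∀ t ω, IsClosed (D t ω)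
  convex : ∀ t ω, Convex ℝ (D t ω)
  zero_mem : ∀ t ω, (0 : J → ℝ) ∈ D t ω
  meas : ∀ t (U : Set (J → ℝ)), IsOpen U →
    MeasurableSet[ℱ t] {ω | (D t ω ∩ U).Nonempty}

/-- The set `M` of adapted claim processes. -/
def ClaimM (ℱ : Filtration (Fin (T + 1)) m0) : Set (Fin (T + 1) → Ω → ℝ) :=
  {c | Adapted ℱ c}

/-- The set `M₋` of almost surely nonpositive claim processes. -/
def Mminus (P : Measure Ω) (ℱ : Filtration (Fin (T + 1)) m0) :
    Set (Fin (T + 1) → Ω → ℝ) :=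
  {c | c ∈ ClaimM ℱ ∧ ∀ t, ∀ᵐ ω ∂P, c t ω ≤ 0}

/-- The set `C` of claim processes superhedgeable with zero cost. -/
def Cset (P : Measure Ω) (ℱ : Filtration (Fin (T + 1)) m0)
    (S : CostProcess ℱ J) (D : ConstraintProcess ℱ J) :
    Set (Fin (T + 1) → Ω → ℝ) :=
  {c | c ∈ ClaimM ℱ ∧ ∃ x : Fin (T + 1) → Ω → (J → ℝ), Adapted ℱ x ∧
    x (Fin.last T) = 0 ∧
    ∀ᵐ ω ∂P, ∀ t, x t ω ∈ D.D t ω ∧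
      S.S t (x t ω - prevP x t ω) ω + (c t ω : EReal) ≤ 0}

/-- The set of claim processes superhedgeable with zero cost in a market with a cash
account: portfolios are pairs `(x⁰, x̃) ∈ ℝ × ℝ^{J̃}`, the cost is
`Sₜ(x,ω) = x⁰ + S̃ₜ(x̃,ω)` and the constraint is `Dₜ(ω) = ℝ × D̃ₜ(ω)`. -/
def CsetCash (P : Measure Ω) (ℱ : Filtration (Fin (T + 1)) m0)
    (St : CostProcess ℱ J) (Dt : ConstraintProcess ℱ J) :
    Set (Fin (T + 1) → Ω → ℝ) :=
  {c | c ∈ ClaimM ℱ ∧ ∃ x : Fin (T + 1) → Ω → ℝ × (J → ℝ), Adapted ℱ x ∧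
    x (Fin.last T) = 0 ∧
    ∀ᵐ ω ∂P, ∀ t, (x t ω).2 ∈ Dt.D t ω ∧
      (((x t ω).1 - (prevP x t ω).1 : ℝ) : EReal) +
        St.S t ((x t ω).2 - (prevP x t ω).2) ω + (c t ω : EReal) ≤ 0}

/- ### Auxiliary lemmas -/

lemma ereal_sum_ne_bot {ι : Type*} (s : Finset ι) (f : ι → EReal) (h : ∀ i ∈ s, f i ≠ ⊥) :
    ∑ i ∈ s, f i ≠ ⊥ := by
  induction s using Finset.cons_induction with
  | empty => simp
  | cons a s' ha ih =>
    rw [Finset.sum_cons]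
    rw [Ne, EReal.add_eq_bot_iff, not_or]
    exact ⟨h a (Finset.mem_cons_self a s'), ih fun i hi' => h i (Finset.mem_cons_of_mem hi')⟩

lemma ereal_coe_sum {ι : Type*} (s : Finset ι) (f : ι → ℝ) :
    ((∑ i ∈ s, f i : ℝ) : EReal) = ∑ i ∈ s, (f i : EReal) := by
  induction s using Finset.cons_induction with
  | empty => simp
  | cons a s' ha ih => rw [Finset.sum_cons, Finset.sum_cons, EReal.coe_add, ih]

lemma ereal_sum_eq_top {ι : Type*} (s : Finset ι) (f : ι → EReal)
    (h : ∀ i ∈ s, f i ≠ ⊥) {i : ι} (hi : i ∈ s) (ht : f i = ⊤) : ∑ j ∈ s, f j = ⊤ := by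
  classical
  rw [← Finset.add_sum_erase _ _ hi, ht]
  exact EReal.top_add_of_ne_bot (ereal_sum_ne_bot _ _ fun j hj => h j (Finset.mem_of_mem_erase hj))

lemma tele_sum (f : ℕ → ℝ) (n : ℕ) :
    ∑ i ∈ Finset.range (n+1), (f i - (if i = 0 then 0 else f (i-1))) = f n := by
  induction n with
  | zero => simp
  | succ n ih => rw [Finset.sum_range_succ, ih]; simp

lemma prevP_snd (x : Fin (T + 1) → Ω → ℝ × (J → ℝ)) (t : Fin (T + 1)) (ω : Ω) :
    prevP (fun t ω => (x t ω).2) t ω = (prevP x t ω).2 := by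
  unfold prevP; split_ifs <;> rfl

lemma prevP_pair (y : Fin (T + 1) → Ω → ℝ) (x : Fin (T + 1) → Ω → (J → ℝ))
    (t : Fin (T + 1)) (ω : Ω) :
    prevP (fun t ω => (y t ω, x t ω)) t ω = (prevP y t ω, prevP x t ω) := by
  unfold prevP; split_ifs <;> rfl

lemma meas_S_comp {ℱ : Filtration (Fin (T + 1)) m0} (St : CostProcess ℱ J)
    (t : Fin (T + 1)) {g : Ω → J → ℝ} (hg : Measurable[ℱ t] g) :
    Measurable[ℱ t] fun ω => St.S t (g ω) ω :=
  (St.meas t).comp (Measurable.prodMk hg measurable_id)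

/-- Example 2: in a market with a cash account, a claim process is
superhedgeable with zero cost iff the accumulated claims can be superhedged by trading in
the risky assets only: `∑ₜ S̃ₜ(Δx̃ₜ) + ∑ₜ cₜ ≤ 0`. -/
theorem CsetCash_eq_accumulated
    (P : Measure Ω) [IsProbabilityMeasure P] (ℱ : Filtration (Fin (T + 1)) m0)
    (hcomp : ∀ (t : Fin (T + 1)) (s : Set Ω), P s = 0 → MeasurableSet[ℱ t] s)
    (St : CostProcess ℱ J) (Dt : ConstraintProcess ℱ J) :
    CsetCash P ℱ St Dt =
    {c | c ∈ ClaimM ℱ ∧ ∃ x : Fin (T + 1) → Ω → (J → ℝ), Adapted ℱ x ∧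
      x (Fin.last T) = 0 ∧
      ∀ᵐ ω ∂P, (∀ t, x t ω ∈ Dt.D t ω) ∧
        (∑ t : Fin (T + 1), St.S t (x t ω - prevP x t ω) ω) +
          ((∑ t : Fin (T + 1), c t ω : ℝ) : EReal) ≤ 0} := by
  ext c
  simp only [CsetCash, Set.mem_setOf_eq]
  constructor
  · rintro ⟨hc, x, hxad, hxT, hae⟩
    refine ⟨hc, fun t ω => (x t ω).2, fun t =>
      (measurable_snd.comp (hxad t)), ?_, ?_⟩
    · funext ω
      show (x (Fin.last T) ω).2 = (0 : Ω → J → ℝ) ω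
      rw [hxT]; rfl
    · filter_upwards [hae] with ω hω
      have hS_ne_top : ∀ t, St.S t ((x t ω).2 - (prevP x t ω).2) ω ≠ ⊤ := by
        intro t htop
        have h2 := (hω t).2
        rw [htop, EReal.coe_add_top, EReal.top_add_of_ne_bot (EReal.coe_ne_bot _)] at h2
        exact absurd h2 (by simp)
      have hr : ∀ t, ((St.S t ((x t ω).2 - (prevP x t ω).2) ω).toReal : EReal)
          = St.S t ((x t ω).2 - (prevP x t ω).2) ω :=
        fun t => EReal.coe_toReal (hS_ne_top t) (St.ne_bot _ _ _)
      have hreal : ∀ t, ((x t ω).1 - (prevP x t ω).1)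
          + (St.S t ((x t ω).2 - (prevP x t ω).2) ω).toReal + c t ω ≤ 0 := by
        intro t
        have h2 := (hω t).2
        rw [← hr t, ← EReal.coe_add, ← EReal.coe_add] at h2
        exact_mod_cast h2
      have hsum_d : ∑ t : Fin (T+1), ((x t ω).1 - (prevP x t ω).1) = 0 := by
        have h1 : ∀ t : Fin (T+1), (x t ω).1 - (prevP x t ω).1 =
            (fun i => if h : i < T+1 then (x ⟨i, h⟩ ω).1 else 0) t.1 -
            (if t.1 = 0 then 0 else
              (fun i => if h : i < T+1 then (x ⟨i, h⟩ ω).1 else 0) (t.1 - 1)) := by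
          intro t
          have hft : (fun i => if h : i < T+1 then (x ⟨i, h⟩ ω).1 else 0) t.1
              = (x t ω).1 := by simp [t.isLt]
          rw [hft]
          congr 1
          unfold prevP
          split_ifs with h
          · rfl
          · simp [lt_of_le_of_lt (Nat.sub_le _ _) t.isLt]
        calc ∑ t : Fin (T+1), ((x t ω).1 - (prevP x t ω).1)
            = ∑ i ∈ Finset.range (T+1),
              ((fun i => if h : i < T+1 then (x ⟨i, h⟩ ω).1 else 0) i -
               (if i = 0 then 0 else
                 (fun i => if h : i < T+1 then (x ⟨i, h⟩ ω).1 else 0) (i - 1))) := by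
              rw [← Fin.sum_univ_eq_sum_range]
              exact Finset.sum_congr rfl fun t _ => h1 t
          _ = (fun i => if h : i < T+1 then (x ⟨i, h⟩ ω).1 else 0) T := tele_sum _ T
          _ = 0 := by
              simp only [Nat.lt_succ_self, dif_pos]
              have : (⟨T, Nat.lt_succ_self T⟩ : Fin (T+1)) = Fin.last T := rfl
              rw [this, hxT]; rfl
      have htot : ∑ t : Fin (T+1), (St.S t ((x t ω).2 - (prevP x t ω).2) ω).toReal
          + ∑ t : Fin (T+1), c t ω ≤ 0 := by
        have hle := Finset.sum_le_sum (fun t (_ : t ∈ Finset.univ) => hreal t)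
        rw [Finset.sum_const, smul_zero] at hle
        calc _ = ∑ t : Fin (T+1), (((x t ω).1 - (prevP x t ω).1)
              + (St.S t ((x t ω).2 - (prevP x t ω).2) ω).toReal + c t ω) := by
                rw [Finset.sum_add_distrib, Finset.sum_add_distrib, hsum_d, zero_add]
          _ ≤ 0 := hle
      refine ⟨fun t => (hω t).1, ?_⟩
      have hrw : ∀ t : Fin (T+1),
          St.S t ((fun t ω => (x t ω).2) t ω - prevP (fun t ω => (x t ω).2) t ω) ω
          = ((St.S t ((x t ω).2 - (prevP x t ω).2) ω).toReal : EReal) := by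
        intro t; rw [prevP_snd, hr t]
      rw [Finset.sum_congr rfl (fun t _ => hrw t), ← ereal_coe_sum, ← EReal.coe_add]
      exact_mod_cast htot
  · rintro ⟨hc, x, hxad, hxT, hae⟩
    classical
    set φ : ℕ → Ω → ℝ := fun s ω =>
      if h : s < T + 1 then
        (St.S ⟨s, h⟩ (x ⟨s, h⟩ ω - prevP x ⟨s, h⟩ ω) ω).toReal + c ⟨s, h⟩ ω
      else 0 with hφ
    set y : Fin (T + 1) → Ω → ℝ := fun t ω =>
      if t = Fin.last T then 0 else -∑ s ∈ Finset.range (t.1 + 1), φ s ω with hy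
    have hφm : ∀ (s : ℕ) (h : s < T + 1), Measurable[ℱ ⟨s, h⟩] (φ s) := by
      intro s h
      have hprev : Measurable[ℱ ⟨s, h⟩] fun ω => prevP x ⟨s, h⟩ ω := by
        unfold prevP
        split_ifs with h0
        · exact measurable_const
        · exact (hxad _).mono (ℱ.mono (by simp [Fin.mk_le_mk])) le_rfl
      have hg : Measurable[ℱ ⟨s, h⟩] fun ω => x ⟨s, h⟩ ω - prevP x ⟨s, h⟩ ω :=
        (hxad _).sub hprev
      have hsm := (meas_S_comp St ⟨s, h⟩ hg).ereal_toReal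
      have hcm : Measurable[ℱ ⟨s, h⟩] (c ⟨s, h⟩) := hc ⟨s, h⟩
      simp only [hφ, dif_pos h]
      exact hsm.add hcm
    refine ⟨hc, fun t ω => (y t ω, x t ω), ?_, ?_, ?_⟩
    · intro t
      refine Measurable.prodMk ?_ (hxad t)
      by_cases ht : t = Fin.last T
      · simp only [hy, if_pos ht]
        exact measurable_const
      · simp only [hy, if_neg ht]
        refine Measurable.neg (Finset.measurable_sum _ fun s hs => ?_)
        have hs1 : s ≤ t.1 := Nat.lt_succ_iff.mp (Finset.mem_range.mp hs)
        have hs' : s < T + 1 := lt_of_le_of_lt hs1 t.isLt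
        exact (hφm s hs').mono (ℱ.mono (by simpa [Fin.le_def] using hs1)) le_rfl
    · funext ω
      show (y (Fin.last T) ω, x (Fin.last T) ω) = (0 : Ω → ℝ × (J → ℝ)) ω
      have h1 : y (Fin.last T) ω = 0 := by simp [hy]
      rw [h1, hxT]; rfl
    · filter_upwards [hae] with ω hω
      obtain ⟨hmem, hsum⟩ := hω
      have hSne : ∀ t : Fin (T + 1), St.S t (x t ω - prevP x t ω) ω ≠ ⊥ :=
        fun t => St.ne_bot _ _ _
      have hsum_ne_top : ∑ t : Fin (T + 1), St.S t (x t ω - prevP x t ω) ω ≠ ⊤ := by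
        intro htop
        rw [htop, EReal.top_add_of_ne_bot (EReal.coe_ne_bot _)] at hsum
        exact absurd hsum (by simp)
      have hS_ne_top : ∀ t, St.S t (x t ω - prevP x t ω) ω ≠ ⊤ := fun t ht =>
        hsum_ne_top (ereal_sum_eq_top _ _ (fun i _ => hSne i) (Finset.mem_univ t) ht)
      have hr : ∀ t, ((St.S t (x t ω - prevP x t ω) ω).toReal : EReal)
          = St.S t (x t ω - prevP x t ω) ω :=
        fun t => EReal.coe_toReal (hS_ne_top t) (hSne t)
      have htot : ∑ t : Fin (T + 1),
          ((St.S t (x t ω - prevP x t ω) ω).toReal + c t ω) ≤ 0 := by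
        have h2 := hsum
        rw [show (∑ t : Fin (T + 1), St.S t (x t ω - prevP x t ω) ω)
            = ((∑ t : Fin (T + 1), (St.S t (x t ω - prevP x t ω) ω).toReal : ℝ) : EReal) from by
          rw [ereal_coe_sum]; exact Finset.sum_congr rfl fun t _ => (hr t).symm] at h2
        rw [← EReal.coe_add] at h2
        have h3 : ∑ t : Fin (T + 1), (St.S t (x t ω - prevP x t ω) ω).toReal
            + ∑ t : Fin (T + 1), c t ω ≤ 0 := by exact_mod_cast h2
        rw [Finset.sum_add_distrib]
        exact h3
      have hφval : ∀ t : Fin (T + 1),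
          φ t.1 ω = (St.S t (x t ω - prevP x t ω) ω).toReal + c t ω := by
        intro t
        simp only [hφ, dif_pos t.isLt]
      have hrange : ∑ s ∈ Finset.range (T + 1), φ s ω
          = ∑ t : Fin (T + 1), ((St.S t (x t ω - prevP x t ω) ω).toReal + c t ω) := by
        rw [← Fin.sum_univ_eq_sum_range (fun s => φ s ω) (T + 1)]
        exact Finset.sum_congr rfl fun t _ => hφval t
      intro t
      refine ⟨hmem t, ?_⟩
      show ((y t ω - (prevP (fun t ω => (y t ω, x t ω)) t ω).1 : ℝ) : EReal)
          + St.S t (x t ω - (prevP (fun t ω => (y t ω, x t ω)) t ω).2) ω + (c t ω : EReal) ≤ 0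
      rw [prevP_pair]
      rw [← hr t, ← EReal.coe_add, ← EReal.coe_add, EReal.coe_nonpos]
      show y t ω - prevP y t ω + (St.S t (x t ω - prevP x t ω) ω).toReal + c t ω ≤ 0
      by_cases ht : t = Fin.last T
      · subst ht
        have hylast : y (Fin.last T) ω = 0 := by simp [hy]
        by_cases hT : T = 0
        · subst hT
          have hp : prevP y (Fin.last 0) ω = 0 := by
            unfold prevP
            rw [if_pos (show (Fin.last 0).1 = 0 from rfl)]
            rfl
          rw [hylast, hp]
          have h0 : (Fin.last 0) = (0 : Fin 1) := rfl
          simpa [Fin.sum_univ_one, h0] using htot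
        · have hTpos : 0 < T := Nat.pos_of_ne_zero hT
          have hprev : prevP y (Fin.last T) ω = -∑ s ∈ Finset.range T, φ s ω := by
            unfold prevP
            rw [if_neg (by simp only [Fin.val_last]; omega)]
            have hne : (⟨(Fin.last T).1 - 1,
                lt_of_le_of_lt (Nat.sub_le _ _) (Fin.last T).isLt⟩ : Fin (T + 1))
                ≠ Fin.last T := by
              simp only [Ne, Fin.ext_iff, Fin.val_mk, Fin.val_last]
              omega
            simp only [hy, if_neg hne]
            congr 2
            exact congrArg Finset.range (show T - 1 + 1 = T by omega)
          rw [hylast, hprev]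
          have hsplit : ∑ s ∈ Finset.range (T + 1), φ s ω
              = ∑ s ∈ Finset.range T, φ s ω + φ T ω := Finset.sum_range_succ _ _
          have hφT : φ T ω = (St.S (Fin.last T) (x (Fin.last T) ω - prevP x (Fin.last T) ω)
              ω).toReal + c (Fin.last T) ω := hφval (Fin.last T)
          have hfin : ∑ s ∈ Finset.range (T + 1), φ s ω ≤ 0 := by rw [hrange]; exact htot
          rw [hsplit, hφT] at hfin
          linarith
      · have hyt : y t ω = -∑ s ∈ Finset.range (t.1 + 1), φ s ω := by
          simp only [hy, if_neg ht]
        have hprev : prevP y t ω = -∑ s ∈ Finset.range t.1, φ s ω := by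
          unfold prevP
          split_ifs with h0
          · simp [h0]
          · have hne : (⟨t.1 - 1, lt_of_le_of_lt (Nat.sub_le _ _) t.isLt⟩ : Fin (T + 1))
                ≠ Fin.last T := by
              have := t.isLt
              have ht' : t.1 ≠ T := fun h => ht (Fin.ext h)
              simp only [Ne, Fin.ext_iff, Fin.val_mk, Fin.val_last]
              omega
            simp only [hy, if_neg hne]
            congr 2
            exact congrArg Finset.range (show t.1 - 1 + 1 = t.1 by omega)
        rw [hyt, hprev]
        have hstep : -∑ s ∈ Finset.range (t.1 + 1), φ s ω
            = -∑ s ∈ Finset.range t.1, φ s ω - φ t.1 ω := by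
          rw [Finset.sum_range_succ]; ring
        rw [hstep, hφval t]
        ring_nf
        simp
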